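/- Let x ∈ ℤ^d \ {0} and let t be dual to x. Suppose ψ(y) = φ(|y|) for a non-increasing function φ : (0,∞) → (0,∞), and that there exist c > 0 and a ∈ (0,1] such that: (i) Σ_{y≠0} ψ(y)^a·e^{−𝔰_t(y)} < ∞, and (ii) φ(n)·φ(m) ≤ c·φ(n+m)·φ(m)^a for all real numbers 0 < m ≤ n. Set λ₀ = (c·Σ_{y≠0} ψ(y)^a·e^{−𝔰_t(y)})^{−1} > 0. Then for every λ ∈ (0, λ₀) there exists c₊ < ∞ such that G^KRW_λ(0, n·x) ≤ c₊·J_{n·x} for all n ≥ 1. -/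

import Mathlib

open Filter Topology

noncomputable section

/-- The canonical embedding of `ℤ^d` into `ℝ^d`. -/
def ic {d : ℕ} (y : Fin d → ℤ) : Fin d → ℝ := fun i => (y i : ℝ)

/-- `nrm` is a norm on `ℝ^d` invariant under the symmetries of `ℤ^d`
(coordinate permutations and sign flips). -/
structure IsLatticeNorm (d : ℕ) (nrm : (Fin d → ℝ) → ℝ) : Prop where
  eq_zero : ∀ x : Fin d → ℝ, nrm x = 0 ↔ x = 0
  smul : ∀ (a : ℝ) (x : Fin d → ℝ), nrm (a • x) = |a| * nrm x
  add_le : ∀ x y : Fin d → ℝ, nrm (x + y) ≤ nrm x + nrm y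
  symm : ∀ (π : Equiv.Perm (Fin d)) (ε : Fin d → ℝ), (∀ i, ε i = 1 ∨ ε i = -1) →
      ∀ x : Fin d → ℝ, nrm (fun i => ε i * x (π i)) = nrm x

/-- `ψ` is a positive, lattice-symmetric, sub-exponential prefactor on `ℤ^d \ {0}`. -/
structure IsPrefactor (d : ℕ) (nrm : (Fin d → ℝ) → ℝ) (ψ : (Fin d → ℤ) → ℝ) : Prop where
  pos : ∀ y : Fin d → ℤ, y ≠ 0 → 0 < ψ y
  symm : ∀ (π : Equiv.Perm (Fin d)) (ε : Fin d → ℤ), (∀ i, ε i = 1 ∨ ε i = -1) →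
      ∀ y : Fin d → ℤ, ψ (fun i => ε i * y (π i)) = ψ y
  subexp : Filter.Tendsto (fun y : Fin d → ℤ => Real.log (ψ y) / nrm (ic y))
      Filter.cofinite (nhds 0)

/-- The coupling constants `J_y = ψ(y) e^{-|y|}` for `y ≠ 0`, and `J_0 = 0`. -/
def Jw {d : ℕ} (nrm : (Fin d → ℝ) → ℝ) (ψ : (Fin d → ℤ) → ℝ) (y : Fin d → ℤ) : ℝ :=
  if y = 0 then 0 else ψ y * Real.exp (-(nrm (ic y)))

/-- The killed random walk two-point function
`G^KRW_λ(x,y) = Σ_{k≥0} Σ_{y_1,…,y_k ≠ 0 : y_1+⋯+y_k = y-x} Π_i λ J_{y_i}`,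
with values in `[0,∞]`; walks are encoded by their lists of nonzero steps. -/
def KRW {d : ℕ} (lam : ℝ) (J : (Fin d → ℤ) → ℝ) (x y : Fin d → ℤ) : ENNReal :=
  ∑' l : {l : List (Fin d → ℤ) // (∀ s ∈ l, s ≠ 0) ∧ l.sum = y - x},
    (l.1.map (fun s => ENNReal.ofReal (lam * J s))).prod

/-- `icl lam J x ν` expresses that the inverse correlation length
`-lim_n (1/n) log G^KRW_λ(0, n•x)` exists and equals `ν`. -/
def icl {d : ℕ} (lam : ℝ) (J : (Fin d → ℤ) → ℝ) (x : Fin d → ℤ) (ν : ℝ) : Prop :=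
  Filter.Tendsto (fun n : ℕ => -(Real.log ((KRW lam J 0 ((n : ℤ) • x)).toReal) / (n : ℝ)))
    Filter.atTop (nhds ν)

/-- Euclidean scalar product on `ℝ^d`. -/
def dotR {d : ℕ} (t y : Fin d → ℝ) : ℝ := ∑ i, t i * y i

/-- `t` is dual to `x`: `t·x = |x|` and `t·y ≤ |y|` for all `y`. -/
def IsDual {d : ℕ} (nrm : (Fin d → ℝ) → ℝ) (t x : Fin d → ℝ) : Prop :=
  dotR t x = nrm x ∧ ∀ y : Fin d → ℝ, dotR t y ≤ nrm y

/-- The surcharge function `𝔰_t(y) = |y| - t·y` of a dual vector `t`. -/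
def scharge {d : ℕ} (nrm : (Fin d → ℝ) → ℝ) (t : Fin d → ℝ) (y : Fin d → ℤ) : ℝ :=
  nrm (ic y) - dotR t (ic y)

end

section Helpers

private lemma lpm_ofReal {α : Type*} (f : α → ℝ) :
    ∀ l : List α, (∀ s ∈ l, 0 ≤ f s) →
      (l.map fun s => ENNReal.ofReal (f s)).prod = ENNReal.ofReal ((l.map f).prod)
  | [], _ => by simp
  | s :: l, h => by
      simp only [List.map_cons, List.prod_cons]
      rw [lpm_ofReal f l (fun w hw => h w (List.mem_cons_of_mem _ hw)),
        ← ENNReal.ofReal_mul (h s (List.mem_cons_self))]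

private lemma lpm_mul {α : Type*} (f g : α → ℝ) :
    ∀ l : List α, (l.map fun s => f s * g s).prod = (l.map f).prod * (l.map g).prod
  | [] => by simp
  | s :: l => by simp only [List.map_cons, List.prod_cons, lpm_mul f g l]; ring

private lemma lpm_exp {α : Type*} (f : α → ℝ) :
    ∀ l : List α, (l.map fun s => Real.exp (f s)).prod = Real.exp ((l.map f).sum)
  | [] => by simp
  | s :: l => by simp [lpm_exp f l, Real.exp_add]

private lemma lsm_add {α : Type*} (f g : α → ℝ) :
    ∀ l : List α, (l.map fun s => f s + g s).sum = (l.map f).sum + (l.map g).sum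
  | [] => by simp
  | s :: l => by simp only [List.map_cons, List.sum_cons, lsm_add f g l]; ring

private lemma lpm_const_mul {α : Type*} (b : ℝ) (f : α → ℝ) :
    ∀ l : List α, (l.map fun s => b * f s).prod = b ^ l.length * (l.map f).prod
  | [] => by simp
  | s :: l => by simp only [List.map_cons, List.prod_cons, List.length_cons,
      lpm_const_mul b f l]; ring

private lemma lpm_pos {α : Type*} (f : α → ℝ) (l : List α) (h : ∀ s ∈ l, 0 < f s) :
    0 < (l.map f).prod :=
  List.prod_pos (by
    intro u hu
    obtain ⟨w, hw, rfl⟩ := List.mem_map.1 hu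
    exact h w hw)

private lemma list_exists_max {α : Type*} (f : α → ℝ) :
    ∀ l : List α, l ≠ [] → ∃ m ∈ l, ∀ w ∈ l, f w ≤ f m
  | [], h => absurd rfl h
  | s :: l, _ => by
      rcases eq_or_ne l [] with rfl | hl
      · exact ⟨s, List.mem_cons_self, by simp⟩
      · obtain ⟨m, hm, hmax⟩ := list_exists_max f l hl
        rcases le_total (f s) (f m) with h' | h'
        · exact ⟨m, List.mem_cons_of_mem _ hm, by
            intro w hw
            rcases List.mem_cons.1 hw with rfl | hw
            · exact h'
            · exact hmax w hw⟩
        · exact ⟨s, List.mem_cons_self, by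
            intro w hw
            rcases List.mem_cons.1 hw with rfl | hw
            · exact le_rfl
            · exact (hmax w hw).trans h'⟩

private lemma insertIdx_len_append {α : Type*} (w : α) :
    ∀ l₁ l₂ : List α, (l₁ ++ l₂).insertIdx l₁.length w = l₁ ++ w :: l₂
  | [], l₂ => by simp [List.insertIdx]
  | s :: l₁, l₂ => by
      simp [List.insertIdx_succ_cons, insertIdx_len_append w l₁ l₂]

private def myConsEquiv (α : Type*) (n : ℕ) : α × (Fin n → α) ≃ (Fin (n + 1) → α) :=
  ⟨fun p => Fin.cons p.1 p.2, fun f => (f 0, fun i => f i.succ),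
    fun p => by simp, fun f => funext fun i => Fin.cases rfl (fun j => rfl) i⟩

private lemma tsum_pi_fin {α : Type*} (g : α → ENNReal) :
    ∀ n : ℕ, ∑' f : Fin n → α, ∏ i, g (f i) = (∑' s, g s) ^ n
  | 0 => by
      rw [pow_zero]
      rw [tsum_eq_single (fun i => i.elim0) (fun b hb => absurd (Subsingleton.elim _ _) hb)]
      simp
  | n + 1 => by
      rw [← (myConsEquiv α n).tsum_eq fun f => ∏ i, g (f i)]
      have : ∀ p : α × (Fin n → α), (∏ i, g (myConsEquiv α n p i)) = g p.1 * ∏ i, g (p.2 i) := by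
        intro p
        have hep : myConsEquiv α n p = Fin.cons p.1 p.2 := rfl
        rw [hep, Fin.prod_univ_succ]
        simp
      simp only [this]
      rw [ENNReal.tsum_prod']
      simp only [ENNReal.tsum_mul_left]
      rw [ENNReal.tsum_mul_right, tsum_pi_fin g n, pow_succ]
      ring

private lemma tsum_ite_le (L : ℕ) (C : ENNReal) :
    ∑' m : ℕ, (if m ≤ L then C else 0) = (L + 1) * C := by
  rw [tsum_eq_sum (s := Finset.range (L + 1))
    (fun b hb => if_neg (by simpa using Nat.lt_succ_iff.not.1 (by simpa using hb)))]
  rw [Finset.sum_congr rfl (fun m hm => if_pos (Nat.lt_succ_iff.1 (Finset.mem_range.1 hm)))]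
  simp [Finset.sum_const, mul_comm]

private lemma facA (φ : ℝ → ℝ) (c a : ℝ) (hc : 0 < c)
    (hφpos : ∀ r : ℝ, 0 < r → 0 < φ r)
    (hfac : ∀ m n : ℝ, 0 < m → m ≤ n →
      φ n * φ m ≤ c * (φ (n + m) * Real.rpow (φ m) a)) :
    ∀ (L : List ℝ) (N : ℝ), 0 < N → (∀ r ∈ L, 0 < r) → (∀ r ∈ L, r ≤ N) →
      φ N * (L.map φ).prod ≤
        c ^ L.length * (φ (N + L.sum) * (L.map fun r => Real.rpow (φ r) a).prod)
  | [], N, hN, _, _ => by simp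
  | r :: L, N, hN, hpos, hle => by
      have hr : 0 < r := hpos r (List.mem_cons_self)
      have hrN : r ≤ N := hle r (List.mem_cons_self)
      have hNr : 0 < N + r := by linarith
      have hP : 0 < (L.map φ).prod :=
        lpm_pos φ L (fun w hw => hφpos w (hpos w (List.mem_cons_of_mem _ hw)))
      have hrp : 0 < Real.rpow (φ r) a := Real.rpow_pos_of_pos (hφpos r hr) a
      have IH := facA φ c a hc hφpos hfac L (N + r) hNr
        (fun w hw => hpos w (List.mem_cons_of_mem _ hw))
        (fun w hw => le_trans (hle w (List.mem_cons_of_mem _ hw)) (by linarith))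
      have h1 : φ N * φ r ≤ c * (φ (N + r) * Real.rpow (φ r) a) := hfac r N hr hrN
      calc φ N * ((r :: L).map φ).prod
          = (φ N * φ r) * (L.map φ).prod := by simp [List.prod_cons]; ring
        _ ≤ (c * (φ (N + r) * Real.rpow (φ r) a)) * (L.map φ).prod :=
            mul_le_mul_of_nonneg_right h1 hP.le
        _ = (c * Real.rpow (φ r) a) * (φ (N + r) * (L.map φ).prod) := by ring
        _ ≤ (c * Real.rpow (φ r) a) *
              (c ^ L.length * (φ ((N + r) + L.sum) *
                (L.map fun s => Real.rpow (φ s) a).prod)) := by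
            exact mul_le_mul_of_nonneg_left IH (by positivity)
        _ = c ^ (r :: L).length * (φ (N + (r :: L).sum) *
              ((r :: L).map fun s => Real.rpow (φ s) a).prod) := by
            rw [show N + (r :: L).sum = (N + r) + L.sum by simp [List.sum_cons]; ring]
            simp only [List.length_cons, List.map_cons, List.prod_cons]
            ring

private lemma ic_add {d : ℕ} (y z : Fin d → ℤ) : ic (y + z) = ic y + ic z := by
  funext i; simp [ic]

private lemma ic_zero {d : ℕ} : ic (0 : Fin d → ℤ) = 0 := by
  funext i; simp [ic]

private lemma ic_list_sum {d : ℕ} :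
    ∀ l : List (Fin d → ℤ), ic l.sum = (l.map ic).sum
  | [] => by simp [ic_zero]
  | y :: l => by simp [List.sum_cons, ic_add, ic_list_sum l]

private lemma dotR_add {d : ℕ} (t u v : Fin d → ℝ) :
    dotR t (u + v) = dotR t u + dotR t v := by
  simp [dotR, mul_add, Finset.sum_add_distrib]

private lemma dotR_zero {d : ℕ} (t : Fin d → ℝ) : dotR t 0 = 0 := by simp [dotR]

private lemma dotR_list_sum {d : ℕ} (t : Fin d → ℝ) :
    ∀ l : List (Fin d → ℝ), dotR t l.sum = (l.map (dotR t)).sum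
  | [] => by simp [dotR_zero]
  | y :: l => by simp [List.sum_cons, dotR_add, dotR_list_sum t l]

end Helpers

section NormFacts

variable {d : ℕ} {nrm : (Fin d → ℝ) → ℝ}

private lemma nrm_zero (h : IsLatticeNorm d nrm) : nrm 0 = 0 := (h.eq_zero 0).2 rfl

private lemma nrm_neg (h : IsLatticeNorm d nrm) (v : Fin d → ℝ) : nrm (-v) = nrm v := by
  have := h.smul (-1) v
  simpa using this

private lemma nrm_nonneg (h : IsLatticeNorm d nrm) (v : Fin d → ℝ) : 0 ≤ nrm v := by
  have h1 := h.add_le v (-v)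
  rw [add_neg_cancel, nrm_zero h, nrm_neg h] at h1
  linarith

private lemma nrm_pos (h : IsLatticeNorm d nrm) {y : Fin d → ℤ} (hy : y ≠ 0) :
    0 < nrm (ic y) := by
  rcases eq_or_lt_of_le (nrm_nonneg h (ic y)) with h0 | h0
  · exfalso
    apply hy
    have := (h.eq_zero (ic y)).1 h0.symm
    funext i
    have := congrFun this i
    simpa [ic] using this
  · exact h0

private lemma nrm_list_sum (h : IsLatticeNorm d nrm) :
    ∀ l : List (Fin d → ℝ), nrm l.sum ≤ (l.map nrm).sum
  | [] => by simp [nrm_zero h]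
  | y :: l => by
      simp only [List.sum_cons, List.map_cons]
      exact le_trans (h.add_le y l.sum)
        (by have := nrm_list_sum h l; linarith)

end NormFacts

/-- For a radially non-increasing prefactor `ψ = φ∘|·|` satisfying
the sub-factorization property `φ(n)φ(m) ≤ c φ(n+m) φ(m)^a` and
`Σ_{y≠0} ψ(y)^a e^{-𝔰_t(y)} < ∞`, for every `λ ∈ (0, λ₀)` with
`λ₀ = (c Σ_{y≠0} ψ(y)^a e^{-𝔰_t(y)})⁻¹ > 0` there is `c₊ < ∞` with
`G^KRW_λ(0, n•x) ≤ c₊ J_{n•x}` for all `n ≥ 1`. -/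
theorem statement10 {d : ℕ} (hd : 1 ≤ d)
    (nrm : (Fin d → ℝ) → ℝ) (hnrm : IsLatticeNorm d nrm)
    (ψ : (Fin d → ℤ) → ℝ) (hψ : IsPrefactor d nrm ψ)
    (hJ1 : HasSum (fun y : Fin d → ℤ => Jw nrm ψ y) 1)
    (x : Fin d → ℤ) (hx : x ≠ 0)
    (t : Fin d → ℝ) (ht : IsDual nrm t (ic x))
    (φ : ℝ → ℝ) (hφpos : ∀ r : ℝ, 0 < r → 0 < φ r)
    (hφanti : ∀ r s : ℝ, 0 < r → r ≤ s → φ s ≤ φ r)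
    (hψdef : ∀ y : Fin d → ℤ, y ≠ 0 → ψ y = φ (nrm (ic y)))
    (c a : ℝ) (hc : 0 < c) (ha0 : 0 < a) (ha1 : a ≤ 1)
    (S : ℝ)
    (hS : HasSum (fun y : {y : Fin d → ℤ // y ≠ 0} =>
      Real.rpow (ψ y.1) a * Real.exp (-(scharge nrm t y.1))) S)
    (hfac : ∀ m n : ℝ, 0 < m → m ≤ n →
      φ n * φ m ≤ c * (φ (n + m) * Real.rpow (φ m) a)) :
    0 < (c * S)⁻¹ ∧
    ∀ lam : ℝ, 0 < lam → lam < (c * S)⁻¹ →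
      ∃ cp : ℝ, ∀ n : ℕ, 1 ≤ n →
        KRW lam (Jw nrm ψ) 0 ((n : ℤ) • x) ≤
          ENNReal.ofReal (cp * Jw nrm ψ ((n : ℤ) • x)) := by
  -- positivity of S
  have hterm_pos : ∀ y : {y : Fin d → ℤ // y ≠ 0},
      0 < Real.rpow (ψ y.1) a * Real.exp (-(scharge nrm t y.1)) := fun y =>
    mul_pos (Real.rpow_pos_of_pos (hψ.pos _ y.2) a) (Real.exp_pos _)
  have hy0 : (fun _ : Fin d => (1 : ℤ)) ≠ 0 := by
    intro h
    have := congrFun h ⟨0, hd⟩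
    simp at this
  have hS_pos : 0 < S :=
    lt_of_lt_of_le (hterm_pos ⟨_, hy0⟩)
      (le_hasSum hS ⟨_, hy0⟩ fun b _ => (hterm_pos b).le)
  have hcS : 0 < c * S := mul_pos hc hS_pos
  refine ⟨inv_pos.2 hcS, ?_⟩
  intro lam hlam0 hlam1
  -- the contraction ratio
  set ρr : ℝ := lam * c * S with hρr_def
  have hρr0 : 0 ≤ ρr := by positivity
  have hρr1 : ρr < 1 := by
    have := mul_lt_mul_of_pos_right hlam1 hcS
    rw [inv_mul_cancel₀ (ne_of_gt hcS)] at this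
    calc ρr = lam * (c * S) := by ring
      _ < 1 := this
  -- the series  T = Σ (n+1) ρr^n
  have hsum1 : Summable (fun n : ℕ => ((n : ℝ) + 1) * ρr ^ n) := by
    have h1 : Summable (fun n : ℕ => (n : ℝ) ^ 1 * ρr ^ n) :=
      summable_pow_mul_geometric_of_norm_lt_one 1 (by
        rwa [Real.norm_eq_abs, abs_of_nonneg hρr0])
    have h2 : Summable (fun n : ℕ => ρr ^ n) := summable_geometric_of_lt_one hρr0 hρr1
    have := h1.add h2
    refine this.congr fun n => by ring
  set T : ℝ := ∑' n : ℕ, ((n : ℝ) + 1) * ρr ^ n with hT_def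
  have hT0 : 0 ≤ T := tsum_nonneg fun n => by positivity
  refine ⟨lam * T, ?_⟩
  intro n hn
  set z : Fin d → ℤ := (n : ℤ) • x with hz_def
  have hz : z ≠ 0 := by
    intro h
    apply hx
    funext i
    have := congrFun h i
    have hn' : (n : ℤ) ≠ 0 := by exact_mod_cast Nat.one_le_iff_ne_zero.1 hn
    simpa [hz_def, hn', Nat.one_le_iff_ne_zero.1 hn] using this
  -- basic norm facts
  have hs_nonneg : ∀ y : Fin d → ℤ, 0 ≤ scharge nrm t y := fun y =>
    sub_nonneg.2 (ht.2 (ic y))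
  have htz : dotR t (ic z) = nrm (ic z) := by
    have hiz : ic z = (n : ℝ) • ic x := by
      funext i
      show ((((n : ℤ) • x) i : ℤ) : ℝ) = ((n : ℝ) • ic x) i
      simp only [Pi.smul_apply, smul_eq_mul, ic]
      push_cast
      ring
    rw [hiz]
    have hd1 : dotR t ((n : ℝ) • ic x) = (n : ℝ) * dotR t (ic x) := by
      simp only [dotR, Finset.mul_sum, Pi.smul_apply, smul_eq_mul]
      exact Finset.sum_congr rfl fun i _ => by ring
    rw [hd1, hnrm.smul, abs_of_nonneg (by positivity : (0:ℝ) ≤ (n:ℝ)), ht.1]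
  -- weights
  set Eν : (Fin d → ℤ) → ENNReal := fun s =>
    if s = 0 then 0 else
      ENNReal.ofReal (Real.rpow (ψ s) a * Real.exp (-(scharge nrm t s))) with hEν_def
  have hEνsum : ∑' s, Eν s = ENNReal.ofReal S := by
    have hsupp : Function.support Eν ⊆ {y : Fin d → ℤ | y ≠ 0} := by
      intro y hy
      intro h0
      apply hy
      simp [hEν_def, h0]
    rw [← tsum_subtype_eq_of_support_subset hsupp]
    have : ∀ y : {y : Fin d → ℤ | y ≠ 0}, Eν y =
        ENNReal.ofReal (Real.rpow (ψ y.1) a * Real.exp (-(scharge nrm t y.1))) := by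
      intro y
      simp only [hEν_def, if_neg y.2]
    rw [tsum_congr this]
    rw [← hS.tsum_eq, ENNReal.ofReal_tsum_of_nonneg (fun y => (hterm_pos y).le) hS.summable]
    rfl
  -- the injection into lists with a marked position
  set A := {l : List (Fin d → ℤ) // (∀ s ∈ l, s ≠ 0) ∧ l.sum = z - 0} with hA_def
  have hzsum : ∀ l : A, l.1.sum = z := fun l => by
    have := l.2.2; simpa using this
  have hlne : ∀ l : A, l.1 ≠ [] := by
    intro l h
    apply hz
    have := hzsum l
    rw [h] at this
    simpa using this.symm
  have Pex : ∀ l : A, ∃ p : List (Fin d → ℤ) × ℕ, ∃ ym l₁ l₂,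
      l.1 = l₁ ++ ym :: l₂ ∧ p = (l₁ ++ l₂, l₁.length) ∧
      ∀ w ∈ l.1, nrm (ic w) ≤ nrm (ic ym) := by
    intro l
    obtain ⟨m, hm, hmax⟩ := list_exists_max (fun y => nrm (ic y)) l.1 (hlne l)
    obtain ⟨l₁, l₂, hdec⟩ := List.append_of_mem hm
    exact ⟨(l₁ ++ l₂, l₁.length), m, l₁, l₂, hdec, rfl, hmax⟩
  set ii : A → List (Fin d → ℤ) × ℕ := fun l => (Pex l).choose with hii_def
  have hrecon : ∀ l : A, l.1 = ((ii l).1.insertIdx (ii l).2 (z - (ii l).1.sum)) := by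
    intro l
    obtain ⟨ym, l₁, l₂, hdec, hp, _⟩ := (Pex l).choose_spec
    have hil : ii l = (l₁ ++ l₂, l₁.length) := by rw [hii_def]; exact hp
    rw [hil]
    have hym : ym = z - (l₁ ++ l₂).sum := by
      have h1 := hzsum l
      rw [hdec] at h1
      simp only [List.sum_append, List.sum_cons] at h1
      rw [List.sum_append]
      rw [← h1]
      abel
    rw [← hym, insertIdx_len_append, ← hdec]
  have hinj : Function.Injective ii := by
    intro l l' h
    apply Subtype.ext
    rw [hrecon l, hrecon l', h]
  -- the dominating weight
  set G : List (Fin d → ℤ) × ℕ → ENNReal := fun p =>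
    if p.2 ≤ p.1.length then
      ENNReal.ofReal lam * (ENNReal.ofReal (lam * c)) ^ p.1.length *
        ENNReal.ofReal (Jw nrm ψ z) * (p.1.map Eν).prod
    else 0 with hG_def
  -- pointwise bound
  have hpoint : ∀ l : A,
      (l.1.map (fun s => ENNReal.ofReal (lam * Jw nrm ψ s))).prod ≤ G (ii l) := by
    intro l
    obtain ⟨ym, l₁, l₂, hdec, hp, hmax⟩ := (Pex l).choose_spec
    have hii : ii l = (l₁ ++ l₂, l₁.length) := by rw [hii_def]; exact hp
    set l' : List (Fin d → ℤ) := l₁ ++ l₂ with hl'_def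
    have hcond : l₁.length ≤ l'.length := by
      simp [hl'_def]
    have hG : G (ii l) = ENNReal.ofReal lam * (ENNReal.ofReal (lam * c)) ^ l'.length *
        ENNReal.ofReal (Jw nrm ψ z) * (l'.map Eν).prod := by
      rw [hii, hG_def]
      exact if_pos hcond
    -- membership facts
    have hym_mem : ym ∈ l.1 := by rw [hdec]; simp
    have hym_ne : ym ≠ 0 := l.2.1 ym hym_mem
    have hmem' : ∀ w ∈ l', w ∈ l.1 := by
      intro w hw
      rw [hdec]
      rcases List.mem_append.1 hw with h | h
      · exact List.mem_append.2 (Or.inl h)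
      · exact List.mem_append.2 (Or.inr (List.mem_cons_of_mem _ h))
    have hne' : ∀ w ∈ l', w ≠ 0 := fun w hw => l.2.1 w (hmem' w hw)
    have hne : ∀ w ∈ l.1, w ≠ 0 := l.2.1
    -- abbreviations
    set nn : (Fin d → ℤ) → ℝ := fun y => nrm (ic y) with hnn_def
    have hnn_pos : ∀ w ∈ l.1, 0 < nn w := fun w hw => nrm_pos hnrm (hne w hw)
    have hnnym : 0 < nn ym := hnn_pos ym hym_mem
    have hnz_pos : 0 < nn z := nrm_pos hnrm hz
    -- decomposition identities
    have hdecp : ∀ f : (Fin d → ℤ) → ℝ,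
        (l.1.map f).prod = f ym * (l'.map f).prod := by
      intro f
      rw [hdec, hl'_def]
      simp only [List.map_append, List.prod_append, List.map_cons, List.prod_cons]
      ring
    have hdecs : ∀ f : (Fin d → ℤ) → ℝ,
        (l.1.map f).sum = f ym + (l'.map f).sum := by
      intro f
      rw [hdec, hl'_def]
      simp only [List.map_append, List.sum_append, List.map_cons, List.sum_cons]
      ring
    -- the sum of norms dominates
    have hsum_nn : nn z + ((l'.map fun s => scharge nrm t s)).sum ≤ (l.1.map nn).sum := by
      have h1 : (l.1.map nn).sum =
          (l.1.map fun s => dotR t (ic s)).sum + (l.1.map fun s => scharge nrm t s).sum := by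
        rw [← lsm_add]
        apply congrArg
        apply List.map_congr_left
        intro w _
        simp [hnn_def, scharge]
      have h2 : (l.1.map fun s => dotR t (ic s)).sum = nn z := by
        have h3 : dotR t (ic l.1.sum) = ((l.1.map ic).map (dotR t)).sum := by
          rw [ic_list_sum, dotR_list_sum]
        rw [List.map_map] at h3
        have h4 : (l.1.map fun s => dotR t (ic s)).sum = dotR t (ic l.1.sum) := by
          rw [h3]; rfl
        rw [h4, hzsum l, htz]
      have h5 : (l.1.map fun s => scharge nrm t s).sum =
          scharge nrm t ym + (l'.map fun s => scharge nrm t s).sum := hdecs _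
      have h6 : 0 ≤ scharge nrm t ym := hs_nonneg ym
      rw [h1, h2, h5]
      linarith
    -- exponential part
    have hexp : (l.1.map fun s => Real.exp (-(nn s))).prod ≤
        Real.exp (-(nn z)) * (l'.map fun s => Real.exp (-(scharge nrm t s))).prod := by
      rw [lpm_exp, lpm_exp, ← Real.exp_add]
      apply Real.exp_le_exp.2
      have e1 : ((l.1.map fun s => -(nn s))).sum = -((l.1.map nn).sum) := by
        induction l.1 with
        | nil => simp
        | cons s l ih => simp [ih]; ring
      have e2 : ((l'.map fun s => -(scharge nrm t s))).sum =
          -((l'.map fun s => scharge nrm t s).sum) := by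
        induction l' with
        | nil => simp
        | cons s l ih => simp [ih]; ring
      rw [e1, e2]
      linarith
    -- prefactor part
    have hpre : (l.1.map ψ).prod ≤
        c ^ l'.length * (ψ z * (l'.map fun s => Real.rpow (ψ s) a).prod) := by
      have hA := facA φ c a hc hφpos hfac (l'.map nn) (nn ym) hnnym
        (by
          intro r hr
          obtain ⟨w, hw, rfl⟩ := List.mem_map.1 hr
          exact hnn_pos w (hmem' w hw))
        (by
          intro r hr
          obtain ⟨w, hw, rfl⟩ := List.mem_map.1 hr
          exact hmax w (hmem' w hw))
      rw [List.map_map, List.map_map, List.length_map] at hA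
      have hφψ : l'.map (φ ∘ nn) = l'.map ψ := by
        apply List.map_congr_left
        intro w hw
        exact (hψdef w (hne' w hw)).symm
      have hφψa : l'.map ((fun r => Real.rpow (φ r) a) ∘ nn) =
          l'.map fun s => Real.rpow (ψ s) a := by
        apply List.map_congr_left
        intro w hw
        simp [Function.comp, hψdef w (hne' w hw), hnn_def]
      rw [hφψ, hφψa] at hA
      have hψym : ψ ym = φ (nn ym) := hψdef ym hym_ne
      have hmono : φ (nn ym + (l'.map nn).sum) ≤ ψ z := by
        rw [hψdef z hz]
        apply hφanti _ _ hnz_pos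
        have := hsum_nn
        have h7 : (l.1.map nn).sum = nn ym + (l'.map nn).sum := hdecs nn
        have h8 : 0 ≤ ((l'.map fun s => scharge nrm t s)).sum := by
          apply List.sum_nonneg
          intro r hr
          obtain ⟨w, hw, rfl⟩ := List.mem_map.1 hr
          exact hs_nonneg w
        linarith
      have hQ : (0:ℝ) ≤ (l'.map fun s => Real.rpow (ψ s) a).prod := by
        apply le_of_lt
        apply lpm_pos
        intro w hw
        exact Real.rpow_pos_of_pos (hψ.pos w (hne' w hw)) a
      calc (l.1.map ψ).prod = ψ ym * (l'.map ψ).prod := hdecp ψ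
        _ = φ (nn ym) * (l'.map ψ).prod := by rw [hψym]
        _ ≤ c ^ l'.length * (φ (nn ym + (l'.map nn).sum) *
              (l'.map fun s => Real.rpow (ψ s) a).prod) := hA
        _ ≤ c ^ l'.length * (ψ z * (l'.map fun s => Real.rpow (ψ s) a).prod) := by
            apply mul_le_mul_of_nonneg_left _ (by positivity)
            exact mul_le_mul_of_nonneg_right hmono hQ
    -- combine real parts
    have hJw_eq : l.1.map (Jw nrm ψ) = l.1.map fun s => ψ s * Real.exp (-(nn s)) := by
      apply List.map_congr_left
      intro w hw
      simp [Jw, if_neg (hne w hw), hnn_def]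
    have hψ_pos_l : (0:ℝ) < (l.1.map ψ).prod :=
      lpm_pos _ _ fun w hw => hψ.pos w (hne w hw)
    have hexp_pos : (0:ℝ) < (l.1.map fun s => Real.exp (-(nn s))).prod :=
      lpm_pos _ _ fun w hw => Real.exp_pos _
    have hreal : (l.1.map fun s => lam * Jw nrm ψ s).prod ≤
        lam * (lam * c) ^ l'.length * Jw nrm ψ z *
          (l'.map fun s => Real.rpow (ψ s) a * Real.exp (-(scharge nrm t s))).prod := by
      have hlen : l.1.length = l'.length + 1 := by
        rw [hdec, hl'_def]; simp; ring
      rw [lpm_const_mul, hlen, hJw_eq, lpm_mul]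
      have hB1 : (0:ℝ) ≤ Real.exp (-(nn z)) *
          (l'.map fun s => Real.exp (-(scharge nrm t s))).prod := by
        apply mul_nonneg (Real.exp_pos _).le
        exact (lpm_pos _ _ fun w hw => Real.exp_pos _).le
      have hB2 : (0:ℝ) ≤ c ^ l'.length * (ψ z * (l'.map fun s => Real.rpow (ψ s) a).prod) := by
        apply mul_nonneg (by positivity)
        apply mul_nonneg (hψ.pos z hz).le
        exact (lpm_pos _ _ fun w hw => Real.rpow_pos_of_pos (hψ.pos w (hne' w hw)) a).le
      have hmul : (l.1.map ψ).prod * (l.1.map fun s => Real.exp (-(nn s))).prod ≤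
          (c ^ l'.length * (ψ z * (l'.map fun s => Real.rpow (ψ s) a).prod)) *
          (Real.exp (-(nn z)) * (l'.map fun s => Real.exp (-(scharge nrm t s))).prod) :=
        mul_le_mul hpre hexp hexp_pos.le hB2
      have hJz : Jw nrm ψ z = ψ z * Real.exp (-(nn z)) := by
        simp [Jw, if_neg hz, hnn_def]
      rw [lpm_mul]
      calc lam ^ (l'.length + 1) *
            ((l.1.map ψ).prod * (l.1.map fun s => Real.exp (-(nn s))).prod)
          ≤ lam ^ (l'.length + 1) *
            ((c ^ l'.length * (ψ z * (l'.map fun s => Real.rpow (ψ s) a).prod)) *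
            (Real.exp (-(nn z)) * (l'.map fun s => Real.exp (-(scharge nrm t s))).prod)) :=
            mul_le_mul_of_nonneg_left hmul (by positivity)
        _ = lam * (lam * c) ^ l'.length * Jw nrm ψ z *
            ((l'.map fun s => Real.rpow (ψ s) a).prod *
              (l'.map fun s => Real.exp (-(scharge nrm t s))).prod) := by
            rw [hJz, mul_pow, pow_succ]
            ring
    -- pass to ENNReal
    have hJnonneg : ∀ s ∈ l.1, 0 ≤ lam * Jw nrm ψ s := by
      intro s hs
      apply mul_nonneg hlam0.le
      simp only [Jw]
      split
      · exact le_rfl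
      · next h => exact (mul_pos (hψ.pos s h) (Real.exp_pos _)).le
    rw [lpm_ofReal _ _ hJnonneg, hG]
    have hEνl' : (l'.map Eν).prod =
        ENNReal.ofReal ((l'.map fun s =>
          Real.rpow (ψ s) a * Real.exp (-(scharge nrm t s))).prod) := by
      have : l'.map Eν = l'.map fun s => ENNReal.ofReal
          (Real.rpow (ψ s) a * Real.exp (-(scharge nrm t s))) := by
        apply List.map_congr_left
        intro w hw
        simp only [hEν_def, if_neg (hne' w hw)]
      rw [this, lpm_ofReal]
      intro w hw
      exact (mul_pos (Real.rpow_pos_of_pos (hψ.pos w (hne' w hw)) a) (Real.exp_pos _)).le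
    rw [hEνl']
    have hJz_nn : (0:ℝ) ≤ Jw nrm ψ z := by
      rw [show Jw nrm ψ z = ψ z * Real.exp (-(nrm (ic z))) from by simp [Jw, if_neg hz]]
      exact (mul_pos (hψ.pos z hz) (Real.exp_pos _)).le
    rw [← ENNReal.ofReal_pow (by positivity : (0:ℝ) ≤ lam * c)]
    rw [← ENNReal.ofReal_mul hlam0.le,
      ← ENNReal.ofReal_mul (by positivity : (0:ℝ) ≤ lam * (lam * c) ^ l'.length),
      ← ENNReal.ofReal_mul (mul_nonneg (by positivity : (0:ℝ) ≤ lam * (lam * c) ^ l'.length) hJz_nn)]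
    exact ENNReal.ofReal_le_ofReal hreal
  -- sum up
  have hstep1 : KRW lam (Jw nrm ψ) 0 z ≤ ∑' p : List (Fin d → ℤ) × ℕ, G p := by
    have h1 : KRW lam (Jw nrm ψ) 0 z = ∑' l : A, (l.1.map
        (fun s => ENNReal.ofReal (lam * Jw nrm ψ s))).prod := rfl
    rw [h1]
    calc ∑' l : A, (l.1.map (fun s => ENNReal.ofReal (lam * Jw nrm ψ s))).prod
        ≤ ∑' l : A, G (ii l) := ENNReal.tsum_le_tsum hpoint
      _ ≤ ∑' p, G p := ENNReal.tsum_comp_le_tsum_of_injective hinj G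
  -- compute the dominating sum
  have hstep2 : ∑' p : List (Fin d → ℤ) × ℕ, G p ≤
      ENNReal.ofReal lam * ENNReal.ofReal (Jw nrm ψ z) * ENNReal.ofReal T := by
    rw [ENNReal.tsum_prod']
    have hrow : ∀ l' : List (Fin d → ℤ), (∑' m : ℕ, G (l', m)) =
        ((l'.length : ENNReal) + 1) * (ENNReal.ofReal lam *
          (ENNReal.ofReal (lam * c)) ^ l'.length *
          ENNReal.ofReal (Jw nrm ψ z) * (l'.map Eν).prod) := by
      intro l'
      rw [← tsum_ite_le l'.length]
    rw [tsum_congr hrow]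
    have hfact : ∀ l' : List (Fin d → ℤ),
        ((l'.length : ENNReal) + 1) * (ENNReal.ofReal lam *
          (ENNReal.ofReal (lam * c)) ^ l'.length *
          ENNReal.ofReal (Jw nrm ψ z) * (l'.map Eν).prod) =
        (ENNReal.ofReal lam * ENNReal.ofReal (Jw nrm ψ z)) *
          (((l'.length : ENNReal) + 1) * (ENNReal.ofReal (lam * c)) ^ l'.length *
            (l'.map Eν).prod) := by
      intro l'
      ring
    rw [tsum_congr hfact, ENNReal.tsum_mul_left]
    rw [mul_assoc (ENNReal.ofReal lam)]
    rw [← mul_assoc]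
    apply mul_le_mul_right
    -- remains: Σ_l' (len+1) ρ^len Π Eν ≤ ofReal T
    have hlist : ∑' l' : List (Fin d → ℤ),
        (((l'.length : ENNReal) + 1) * (ENNReal.ofReal (lam * c)) ^ l'.length *
          (l'.map Eν).prod) = ∑' n : ℕ, (((n : ENNReal) + 1) *
            (ENNReal.ofReal (lam * c) * ENNReal.ofReal S) ^ n) := by
      rw [← (List.equivSigmaTuple (α := Fin d → ℤ)).symm.tsum_eq]
      rw [ENNReal.tsum_sigma']
      apply tsum_congr
      intro k
      have hterm : ∀ g : Fin k → (Fin d → ℤ),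
          ((((List.equivSigmaTuple.symm ⟨k, g⟩ : List (Fin d → ℤ)).length : ENNReal) + 1) *
            (ENNReal.ofReal (lam * c)) ^
              (List.equivSigmaTuple.symm ⟨k, g⟩ : List (Fin d → ℤ)).length *
            ((List.equivSigmaTuple.symm ⟨k, g⟩ : List (Fin d → ℤ)).map Eν).prod) =
          ((k : ENNReal) + 1) * (ENNReal.ofReal (lam * c)) ^ k * ∏ i, Eν (g i) := by
        intro g
        have hsymm : (List.equivSigmaTuple.symm ⟨k, g⟩ : List (Fin d → ℤ)) = List.ofFn g := rfl
        rw [hsymm, List.length_ofFn, List.map_ofFn, List.prod_ofFn]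
        rfl
      rw [tsum_congr hterm]
      rw [ENNReal.tsum_mul_left, tsum_pi_fin, hEνsum, mul_pow]
      ring
    rw [hlist]
    have hfin : ∀ k : ℕ, ((k : ENNReal) + 1) *
        (ENNReal.ofReal (lam * c) * ENNReal.ofReal S) ^ k =
        ENNReal.ofReal (((k : ℝ) + 1) * ρr ^ k) := by
      intro k
      rw [← ENNReal.ofReal_mul (by positivity : (0:ℝ) ≤ lam * c)]
      have : lam * c * S = ρr := by rw [hρr_def]
      rw [this]
      rw [ENNReal.ofReal_mul (by positivity : (0:ℝ) ≤ (k:ℝ) + 1)]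
      rw [ENNReal.ofReal_pow hρr0]
      congr 1
      rw [ENNReal.ofReal_add (by positivity) zero_le_one]
      simp [ENNReal.ofReal_natCast]
    rw [tsum_congr hfin]
    rw [← ENNReal.ofReal_tsum_of_nonneg (fun k => by positivity) hsum1]
  -- conclude
  calc KRW lam (Jw nrm ψ) 0 z ≤ ∑' p : List (Fin d → ℤ) × ℕ, G p := hstep1
    _ ≤ ENNReal.ofReal lam * ENNReal.ofReal (Jw nrm ψ z) * ENNReal.ofReal T := hstep2
    _ = ENNReal.ofReal (lam * T * Jw nrm ψ z) := by
        rw [ENNReal.ofReal_mul (by positivity : (0:ℝ) ≤ lam * T)]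
        rw [ENNReal.ofReal_mul hlam0.le]
        ring
    _ = ENNReal.ofReal (lam * T * Jw nrm ψ ((n : ℤ) • x)) := by rw [← hz_def]
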